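/- Let n ≥ 0 and let λ(p) = p^{n+1} + v_n p^{n-1} + ⋯ + v₂ p + v₁ + u/(p-w) with u ≠ 0, and suppose λ'(p) = 0 has n+2 pairwise distinct roots r₁,…,r_{n+2}, none equal to w. Then for each i, Σ_{k≠i} (λ(r_k) - λ(r_i))/(λ''(r_k)(r_k - r_i)²) = (1-n)/(2(n+1)). -/

import Mathlib

open Finset

/-- The superpotential `λ(p) = p^{n+1} + v_n p^{n-1} + ⋯ + v₂ p + v₁ + u/(p-w)`. -/
noncomputable def lam (n : ℕ) (v : ℕ → ℂ) (u w : ℂ) : ℂ → ℂ :=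
  fun p => p ^ (n + 1) + (∑ i ∈ Finset.range n, v (i + 1) * p ^ i) + u / (p - w)

open Polynomial


noncomputable def Pl (n : ℕ) (v : ℕ → ℂ) : Polynomial ℂ :=
  X ^ (n + 1) + ∑ i ∈ Finset.range n, C (v (i + 1)) * X ^ i

lemma lam_eq (n : ℕ) (v : ℕ → ℂ) (u w : ℂ) (p : ℂ) :
    lam n v u w p = (Pl n v).eval p + u * (p - w)⁻¹ := by
  simp [lam, Pl, div_eq_mul_inv, eval_finset_sum]

lemma lam_hasDeriv (n : ℕ) (v : ℕ → ℂ) (u w : ℂ) {p : ℂ} (hp : p ≠ w) :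
    HasDerivAt (lam n v u w) ((derivative (Pl n v)).eval p - u / (p - w) ^ 2) p := by
  have hne : p - w ≠ 0 := sub_ne_zero.mpr hp
  have h2 : HasDerivAt (fun q : ℂ => u * (q - w)⁻¹) (u * (-1 / (p - w) ^ 2)) p :=
    (((hasDerivAt_id p).sub_const w).inv hne).const_mul u
  have h := ((Pl n v).hasDerivAt p).add h2
  have he : (derivative (Pl n v)).eval p - u / (p - w) ^ 2
      = (derivative (Pl n v)).eval p + u * (-1 / (p - w) ^ 2) := by ring
  rw [he, funext (lam_eq n v u w)]
  exact h

lemma lam_deriv (n : ℕ) (v : ℕ → ℂ) (u w : ℂ) {p : ℂ} (hp : p ≠ w) :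
    deriv (lam n v u w) p = (derivative (Pl n v)).eval p - u / (p - w) ^ 2 :=
  (lam_hasDeriv n v u w hp).deriv

lemma lam_iterderiv (n : ℕ) (v : ℕ → ℂ) (u w : ℂ) {p : ℂ} (hp : p ≠ w) :
    iteratedDeriv 2 (lam n v u w) p
      = (derivative (derivative (Pl n v))).eval p + 2 * u / (p - w) ^ 3 := by
  have hne : p - w ≠ 0 := sub_ne_zero.mpr hp
  rw [show (2:ℕ) = 1 + 1 from rfl, iteratedDeriv_succ, iteratedDeriv_one]
  have hev : deriv (lam n v u w) =ᶠ[nhds p]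
      fun q => (derivative (Pl n v)).eval q - u / (q - w) ^ 2 := by
    filter_upwards [eventually_ne_nhds hp] with q hq using lam_deriv n v u w hq
  rw [hev.deriv_eq]
  have hsq : HasDerivAt (fun q : ℂ => (q - w) ^ 2) (2 * (p - w) ^ 1 * 1) p :=
    (((hasDerivAt_id p).sub_const w)).pow 2
  have h2 : HasDerivAt (fun q : ℂ => u * ((q - w) ^ 2)⁻¹)
      (u * (-(2 * (p - w) ^ 1 * 1) / ((p - w) ^ 2) ^ 2)) p :=
    (hsq.inv (pow_ne_zero 2 hne)).const_mul u
  have h := ((derivative (Pl n v)).hasDerivAt p).sub h2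
  have h' : deriv (fun q => (derivative (Pl n v)).eval q - u / (q - w) ^ 2)
      = deriv (fun q => (derivative (Pl n v)).eval q - u * ((q - w) ^ 2)⁻¹) := by
    simp [div_eq_mul_inv]
  rw [h', show deriv (fun q => (derivative (Pl n v)).eval q - u * ((q - w) ^ 2)⁻¹) p = _ from h.deriv]
  field_simp
  ring

lemma eval_derivative_prod {m : ℕ} (r : Fin m → ℂ) (k : Fin m) :
    (derivative (∏ j, (X - C (r j)))).eval (r k)
      = ∏ j ∈ Finset.univ.erase k, (r k - r j) := by
  classical
  rw [← Finset.mul_prod_erase Finset.univ _ (Finset.mem_univ k), derivative_mul]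
  simp only [derivative_sub, derivative_X, derivative_C, sub_zero, one_mul, eval_add, eval_mul,
    eval_sub, eval_X, eval_C, sub_self, zero_mul, add_zero]
  rw [eval_prod]
  simp

lemma sum_eval_div_prod {m : ℕ} (hm : 0 < m) (r : Fin m → ℂ) (hinj : Function.Injective r)
    (F : Polynomial ℂ) (hdeg : F.natDegree ≤ m - 1) :
    ∑ k, F.eval (r k) * (∏ j ∈ Finset.univ.erase k, (r k - r j))⁻¹ = F.coeff (m - 1) := by
  classical
  set c : Fin m → ℂ := fun k => F.eval (r k) * (∏ j ∈ Finset.univ.erase k, (r k - r j))⁻¹ with hc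
  have hprodne : ∀ k : Fin m, (∏ j ∈ Finset.univ.erase k, (r k - r j)) ≠ 0 := by
    intro k
    refine Finset.prod_ne_zero_iff.mpr fun j hj => sub_ne_zero.mpr ?_
    exact fun h => (Finset.mem_erase.mp hj).1 (hinj h).symm
  set G : Polynomial ℂ :=
    ∑ k, C (c k) * ∏ j ∈ Finset.univ.erase k, (X - C (r j)) with hG
  have hmon : ∀ k : Fin m, (∏ j ∈ Finset.univ.erase k, (X - C (r j))).Monic :=
    fun k => monic_prod_of_monic _ _ fun j _ => monic_X_sub_C (r j)
  have hdegp : ∀ k : Fin m, (∏ j ∈ Finset.univ.erase k, (X - C (r j))).natDegree = m - 1 := by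
    intro k
    rw [natDegree_prod_of_monic _ _ fun j _ => monic_X_sub_C (r j)]
    simp [Finset.card_erase_of_mem]
  have hGeval : ∀ k : Fin m, G.eval (r k) = F.eval (r k) := by
    intro k
    rw [hG, eval_finset_sum]
    rw [Finset.sum_eq_single k]
    · simp only [eval_mul, eval_C, eval_prod, eval_sub, eval_X]
      rw [hc]
      field_simp
      rw [mul_div_assoc, div_self (hprodne k), mul_one]
    · intro b _ hbk
      simp only [eval_mul, eval_C, eval_prod, eval_sub, eval_X]
      rw [Finset.prod_eq_zero (Finset.mem_erase.mpr ⟨Ne.symm hbk, Finset.mem_univ k⟩)]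
      · ring
      · ring
    · simp
  have hdegG : G.natDegree ≤ m - 1 := by
    refine (natDegree_sum_le _ _).trans ?_
    apply Finset.sup_le
    intro k _
    simp only [Function.comp_apply]
    exact (natDegree_C_mul_le _ _).trans (le_of_eq (hdegp k))
  have hFG : F - G = 0 := by
    apply Polynomial.eq_zero_of_natDegree_lt_card_of_eval_eq_zero _ hinj
    · intro k
      simp [hGeval k]
    · calc (F - G).natDegree ≤ max F.natDegree G.natDegree := natDegree_sub_le _ _
        _ ≤ m - 1 := max_le hdeg hdegG
        _ < m := Nat.sub_lt hm one_pos |>.trans_le le_rfl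
        _ = Fintype.card (Fin m) := (Fintype.card_fin m).symm
  have hFeqG : F = G := sub_eq_zero.mp hFG
  rw [hFeqG, hG, finset_sum_coeff]
  congr 1
  funext k
  rw [coeff_C_mul]
  have : (∏ j ∈ Finset.univ.erase k, (X - C (r j))).coeff (m - 1) = 1 := by
    have := (hmon k).coeff_natDegree
    rwa [hdegp k] at this
  rw [this, mul_one]

/-- if `λ' = 0` has `n+2` pairwise distinct roots `r₁,…,r_{n+2}`,
none equal to `w`, then for each `i`,
`Σ_{k≠i} (λ(r_k) - λ(r_i))/(λ''(r_k)(r_k - r_i)²) = (1-n)/(2(n+1))`. -/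
theorem residue_sum_identity_h1
    (n : ℕ) (v : ℕ → ℂ) (u w : ℂ) (hu : u ≠ 0)
    (r : Fin (n + 2) → ℂ) (hinj : Function.Injective r)
    (hw : ∀ k, r k ≠ w)
    (hcrit : ∀ k, deriv (lam n v u w) (r k) = 0) :
    ∀ i : Fin (n + 2),
      ∑ k ∈ Finset.univ.erase i,
        (lam n v u w (r k) - lam n v u w (r i)) /
          (iteratedDeriv 2 (lam n v u w) (r k) * (r k - r i) ^ 2)
      = ((1 : ℂ) - (n : ℂ)) / (2 * ((n : ℂ) + 1)) := by
  intro i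
  have hrw : ∀ k, r k - w ≠ 0 := fun k => sub_ne_zero.mpr (hw k)
  have ha : ∀ k, (derivative (Pl n v)).eval (r k) = u / (r k - w) ^ 2 := by
    intro k
    have h := hcrit k
    rw [lam_deriv n v u w (hw k)] at h
    exact sub_eq_zero.mp h
  have hPcoeff : (Pl n v).coeff (n+1) = 1 := by
    rw [Pl, coeff_add, coeff_X_pow, if_pos rfl, finset_sum_coeff]
    rw [Finset.sum_eq_zero, add_zero]
    intro j hj
    rw [coeff_C_mul, coeff_X_pow, if_neg (by have := Finset.mem_range.mp hj; omega), mul_zero]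
  have hPdeg : (Pl n v).natDegree = n + 1 := by
    apply le_antisymm
    · apply (natDegree_add_le _ _).trans
      apply max_le (by simp)
      apply (natDegree_sum_le _ _).trans
      apply Finset.sup_le
      intro j hj
      exact (natDegree_C_mul_le _ _).trans (by simp; have := Finset.mem_range.mp hj; omega)
    · exact le_natDegree_of_ne_zero (by rw [hPcoeff]; exact one_ne_zero)
  have hPmon : (Pl n v).Monic := by
    rw [Monic, leadingCoeff, hPdeg, hPcoeff]
  have hP'coeff : (derivative (Pl n v)).coeff n = (n:ℂ) + 1 := by
    rw [coeff_derivative, hPcoeff]; push_cast; ring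
  have hn1 : ((n:ℂ) + 1) ≠ 0 := Nat.cast_add_one_ne_zero n
  have hP'deg : (derivative (Pl n v)).natDegree = n := by
    apply le_antisymm
    · exact (natDegree_derivative_le _).trans (by rw [hPdeg]; omega)
    · exact le_natDegree_of_ne_zero (by rw [hP'coeff]; exact hn1)
  have hP'ne : derivative (Pl n v) ≠ 0 := fun h => by rw [h] at hP'coeff; simp at hP'coeff; exact hn1 hP'coeff.symm
  have hP'lead : (derivative (Pl n v)).leadingCoeff = (n:ℂ) + 1 := by
    rw [leadingCoeff, hP'deg, hP'coeff]
  -- Q facts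
  set Q : Polynomial ℂ := derivative (Pl n v) * (X - C w) ^ 2 - C u with hQdef
  have hXw : ((X - C w) ^ 2 : Polynomial ℂ).Monic := (monic_X_sub_C w).pow 2
  have hmuldeg : (derivative (Pl n v) * (X - C w) ^ 2).natDegree = n + 2 := by
    rw [natDegree_mul hP'ne hXw.ne_zero, hP'deg, natDegree_pow, natDegree_X_sub_C]
  have hQcoeff : Q.coeff (n+2) = (n:ℂ) + 1 := by
    rw [hQdef, coeff_sub, coeff_C, if_neg (by omega), sub_zero, ← hmuldeg, coeff_natDegree,
      leadingCoeff_mul, hP'lead, hXw.leadingCoeff, mul_one]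
  have hQdeg : Q.natDegree = n + 2 := by
    apply le_antisymm
    · exact (natDegree_sub_le _ _).trans (max_le hmuldeg.le (by simp))
    · exact le_natDegree_of_ne_zero (by rw [hQcoeff]; exact hn1)
  have hprodne : ∀ k : Fin (n+2), (∏ j ∈ Finset.univ.erase k, (r k - r j)) ≠ 0 := by
    intro k
    refine Finset.prod_ne_zero_iff.mpr fun j hj => sub_ne_zero.mpr ?_
    exact fun h => (Finset.mem_erase.mp hj).1 (hinj h).symm
  have hQ0 : ∀ k, Q.eval (r k) = 0 := by
    intro k
    rw [hQdef]
    simp only [eval_sub, eval_mul, eval_pow, eval_X, eval_C, ha k]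
    rw [div_mul_cancel₀ u (pow_ne_zero 2 (hrw k)), sub_self]
  have hprod_mon : (∏ k, (X - C (r k)) : Polynomial ℂ).Monic :=
    monic_prod_of_monic _ _ fun k _ => monic_X_sub_C _
  have hprod_deg : (∏ k, (X - C (r k)) : Polynomial ℂ).natDegree = n + 2 := by
    rw [natDegree_prod_of_monic _ _ fun k _ => monic_X_sub_C _]
    simp
  have hQfact : Q = C ((n:ℂ)+1) * ∏ k, (X - C (r k)) := by
    have hdegD : (Q - C ((n:ℂ)+1) * ∏ k, (X - C (r k))).natDegree ≤ n + 2 :=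
      (natDegree_sub_le _ _).trans (max_le hQdeg.le ((natDegree_C_mul_le _ _).trans hprod_deg.le))
    have hcoeffD : (Q - C ((n:ℂ)+1) * ∏ k, (X - C (r k))).coeff (n+2) = 0 := by
      have hpc : (∏ k, (X - C (r k)) : Polynomial ℂ).coeff (n+2) = 1 := by
        have h := hprod_mon.coeff_natDegree; rwa [hprod_deg] at h
      rw [coeff_sub, hQcoeff, coeff_C_mul, hpc]; ring
    have hD : Q - C ((n:ℂ)+1) * ∏ k, (X - C (r k)) = 0 := by
      rcases eq_or_ne (Q - C ((n:ℂ)+1) * ∏ k, (X - C (r k))) 0 with h0 | h0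
      · exact h0
      · apply Polynomial.eq_zero_of_natDegree_lt_card_of_eval_eq_zero _ hinj
        · intro k
          rw [eval_sub, hQ0 k, eval_mul, eval_prod]
          rw [Finset.prod_eq_zero (Finset.mem_univ k) (by simp)]
          ring
        · rw [Fintype.card_fin]
          refine lt_of_le_of_ne hdegD fun hEq => h0 ?_
          exact leadingCoeff_eq_zero.mp (by rw [leadingCoeff, hEq, hcoeffD])
    exact sub_eq_zero.mp hD
  have hQ' : ∀ k, (derivative Q).eval (r k) = ((n:ℂ)+1) * ∏ j ∈ Finset.univ.erase k, (r k - r j) := by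
    intro k
    rw [hQfact, derivative_C_mul, eval_mul, eval_C, eval_derivative_prod]
  have hQ'ne : ∀ k, (derivative Q).eval (r k) ≠ 0 := by
    intro k
    rw [hQ' k]
    exact mul_ne_zero hn1 (hprodne k)
  have hQder : derivative Q = derivative (derivative (Pl n v)) * (X - C w) ^ 2
      + derivative (Pl n v) * (C 2 * (X - C w)) := by
    rw [hQdef]
    simp only [derivative_sub, derivative_mul, derivative_C, derivative_pow, derivative_X,
      natDegree_X_sub_C, derivative_sub, sub_zero]
    ring_nf
  have hlam2 : ∀ k, iteratedDeriv 2 (lam n v u w) (r k)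
      = (derivative Q).eval (r k) / (r k - w) ^ 2 := by
    intro k
    rw [lam_iterderiv n v u w (hw k), hQder]
    simp only [eval_add, eval_mul, eval_pow, eval_sub, eval_X, eval_C, ha k]
    field_simp [hrw k]
  set L : ℂ := lam n v u w (r i) with hLdef
  set H : Polynomial ℂ := (Pl n v - C L) * (X - C w) ^ 2 + C u * (X - C w) with hHdef
  have hHeval : ∀ p : ℂ, p ≠ w → H.eval p = (lam n v u w p - L) * (p - w) ^ 2 := by
    intro p hp
    rw [lam_eq]
    simp only [hHdef, eval_add, eval_mul, eval_pow, eval_sub, eval_X, eval_C]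
    field_simp [sub_ne_zero.mpr hp]
    ring
  have hPi : (Pl n v).eval (r i) - L = -(u * (r i - w)⁻¹) := by
    rw [hLdef, lam_eq]; ring
  have hHi : H.eval (r i) = 0 := by
    simp only [hHdef, eval_add, eval_mul, eval_pow, eval_sub, eval_X, eval_C]
    have h := hPi
    field_simp [hrw i] at h ⊢
    linear_combination (r i - w) * h
  have hH' : derivative H = derivative (Pl n v) * (X - C w) ^ 2
      + (Pl n v - C L) * (C 2 * (X - C w)) + C u := by
    rw [hHdef]
    simp only [derivative_add, derivative_mul, derivative_C, derivative_pow, derivative_X,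
      derivative_sub, natDegree_X_sub_C, sub_zero, zero_mul, zero_add]
    ring_nf
  have hH'i : (derivative H).eval (r i) = 0 := by
    rw [hH']
    simp only [eval_add, eval_mul, eval_pow, eval_sub, eval_X, eval_C, ha i]
    rw [hPi]
    field_simp [hrw i]
    ring
  obtain ⟨H1, hH1⟩ : (X - C (r i)) ∣ H := dvd_iff_isRoot.mpr hHi
  have hH1i : H1.eval (r i) = 0 := by
    have h := hH'i
    rw [hH1, derivative_mul, derivative_sub, derivative_X, derivative_C, sub_zero, one_mul] at h
    simpa using h
  obtain ⟨F, hFf⟩ : (X - C (r i)) ∣ H1 := dvd_iff_isRoot.mpr hH1i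
  have hHF : H = (X - C (r i)) ^ 2 * F := by rw [hH1, hFf]; ring
  -- degree facts for H
  have hPL1 : (Pl n v - C L).natDegree = n + 1 := by rw [natDegree_sub_C, hPdeg]
  have hPLmon : (Pl n v - C L).Monic := by
    rw [Monic, leadingCoeff, hPL1, coeff_sub, hPcoeff, coeff_C, if_neg (by omega), sub_zero]
  have hAmon : ((Pl n v - C L) * (X - C w) ^ 2).Monic := hPLmon.mul hXw
  have hAdeg : ((Pl n v - C L) * (X - C w) ^ 2).natDegree = n + 3 := by
    rw [hPLmon.natDegree_mul hXw, hPL1, natDegree_pow, natDegree_X_sub_C]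
  have hdegCu : (C u * (X - C w)).degree < ((Pl n v - C L) * (X - C w) ^ 2).degree := by
    rw [degree_eq_natDegree hAmon.ne_zero, hAdeg]
    apply lt_of_le_of_lt (degree_mul_le _ _)
    rw [degree_X_sub_C]
    apply lt_of_le_of_lt (add_le_add_left degree_C_le 1)
    rw [zero_add]
    exact_mod_cast (by omega : (1:ℕ) < n + 3)
  have hHmon : H.Monic := by rw [hHdef]; exact hAmon.add_of_left hdegCu
  have hHdeg : H.natDegree = n + 3 := by
    rw [hHdef, natDegree_add_eq_left_of_degree_lt hdegCu, hAdeg]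
  have hXri : ((X - C (r i)) ^ 2 : Polynomial ℂ) ≠ 0 := pow_ne_zero 2 (X_sub_C_ne_zero (r i))
  have hFne : F ≠ 0 := by
    intro h0
    rw [h0, mul_zero] at hHF
    exact hHmon.ne_zero hHF
  have hFdeg : F.natDegree = n + 1 := by
    have h := natDegree_mul hXri hFne
    rw [← hHF, hHdeg, natDegree_pow, natDegree_X_sub_C] at h
    omega
  have hFmon : F.Monic := by
    have h : H.leadingCoeff = ((X - C (r i)) ^ 2).leadingCoeff * F.leadingCoeff := by
      rw [hHF, leadingCoeff_mul]
    rw [hHmon.leadingCoeff, ((monic_X_sub_C (r i)).pow 2).leadingCoeff, one_mul] at h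
    exact h.symm
  have hFk : ∀ k, (r k - r i) ^ 2 * F.eval (r k) = (lam n v u w (r k) - L) * (r k - w) ^ 2 := by
    intro k
    have h := hHeval (r k) (hw k)
    rw [hHF] at h
    simp only [eval_mul, eval_pow, eval_sub, eval_X, eval_C] at h
    exact h
  -- second derivative computations
  have e1 : (derivative (derivative H)).eval (r i) = 2 * F.eval (r i) := by
    rw [hHF]
    simp only [derivative_mul, derivative_pow, derivative_sub, derivative_X, derivative_C,
      derivative_add, sub_zero, mul_one, eval_add, eval_mul, eval_pow, eval_sub, eval_X,
      eval_C, sub_self]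
    ring
  have e2 : (derivative (derivative H)).eval (r i) = (derivative Q).eval (r i) := by
    rw [hH', hQder]
    simp only [derivative_add, derivative_mul, derivative_pow, derivative_sub, derivative_X,
      derivative_C, sub_zero, zero_mul, zero_add, add_zero, mul_one, eval_add, eval_mul,
      eval_pow, eval_sub, eval_X, eval_C, ha i]
    rw [hPi]
    field_simp [hrw i]
    ring
  have hFi : F.eval (r i) = (derivative Q).eval (r i) / 2 := by
    rw [← e2, e1]; ring
  have hsum : ∑ k, F.eval (r k) * (∏ j ∈ Finset.univ.erase k, (r k - r j))⁻¹ = 1 := by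
    have h := sum_eval_div_prod (m := n + 2) (by omega) r hinj F (by rw [hFdeg]; omega)
    rw [h]
    have hc := hFmon.coeff_natDegree
    rwa [hFdeg] at hc
  have hterm : ∀ k ∈ Finset.univ.erase i,
      (lam n v u w (r k) - L) / (iteratedDeriv 2 (lam n v u w) (r k) * (r k - r i) ^ 2)
      = ((n:ℂ)+1)⁻¹ * (F.eval (r k) * (∏ j ∈ Finset.univ.erase k, (r k - r j))⁻¹) := by
    intro k hk
    have hki : r k - r i ≠ 0 := sub_ne_zero.mpr fun h => (Finset.mem_erase.mp hk).1 (hinj h)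
    have hlamk : lam n v u w (r k) - L = F.eval (r k) * (r k - r i) ^ 2 / (r k - w) ^ 2 := by
      rw [eq_div_iff (pow_ne_zero 2 (hrw k))]
      linear_combination (-1 : ℂ) * hFk k
    rw [hlamk, hlam2 k, hQ' k]
    field_simp [hki, hrw k, hn1, hprodne k]
  rw [Finset.sum_congr rfl hterm, ← Finset.mul_sum]
  have hFi' : F.eval (r i) * (∏ j ∈ Finset.univ.erase i, (r i - r j))⁻¹ = ((n:ℂ)+1)/2 := by
    rw [hFi, hQ' i]
    field_simp [hprodne i]
  have hsplit : ∑ k ∈ Finset.univ.erase i, F.eval (r k) * (∏ j ∈ Finset.univ.erase k, (r k - r j))⁻¹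
      = 1 - ((n:ℂ)+1)/2 := by
    have h := Finset.add_sum_erase Finset.univ
      (fun k => F.eval (r k) * (∏ j ∈ Finset.univ.erase k, (r k - r j))⁻¹) (Finset.mem_univ i)
    beta_reduce at h
    rw [hsum, hFi'] at h
    exact eq_sub_of_add_eq' h
  rw [hsplit]
  field_simp
  ring
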